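/- Let q₀ ≥ ⋯ ≥ q_{n−1} be reals, m ≥ 1, n ≥ 2m+1, b > 0, and let w* = w̄ := (1/(n−m))·Σ_{h=0}^{n−m−1} q_h. If all m appended values equal q₀ + b, then the m-trimmed mean of the resulting n+m values equals w*. -/

import Mathlib

open Finset

/-- Median of a multiset of reals: average of the two middle order statistics
(equal to the middle one for odd cardinality). -/
noncomputable def med (s : Multiset ℝ) : ℝ :=
  ((s.sort (· ≤ ·)).getD ((Multiset.card s - 1) / 2) 0 +
    (s.sort (· ≤ ·)).getD (Multiset.card s / 2) 0) / 2

/-- `m`-trimmed mean: remove the `m` largest and `m` smallest values and average the rest. -/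
noncomputable def trimmedMean (m : ℕ) (s : Multiset ℝ) : ℝ :=
  ((((s.sort (· ≤ ·)).drop m).take (Multiset.card s - 2 * m)).sum) /
    ((Multiset.card s : ℝ) - 2 * m)

/-- The multiset of the first `n` values of `q`. -/
noncomputable def qMs (n : ℕ) (q : ℕ → ℝ) : Multiset ℝ :=
  (Finset.range n).val.map q


lemma list_range_map_sum (q : ℕ → ℝ) (k : ℕ) :
    ((List.range k).map q).sum = ∑ h ∈ Finset.range k, q h := by
  induction k with
  | zero => simp
  | succ k ih => rw [List.range_succ, Finset.sum_range_succ]; simp [ih]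

theorem stmt15 (n m : ℕ) (hm : 1 ≤ m) (hn : 2 * m + 1 ≤ n) (q : ℕ → ℝ)
    (hq : ∀ i j, i ≤ j → j < n → q j ≤ q i) (b wstar : ℝ) (hb : 0 < b)
    (hw : wstar = (∑ h ∈ Finset.range (n - m), q h) / ((n : ℝ) - m)) :
    trimmedMean m (qMs n q + Multiset.replicate m (q 0 + b)) = wstar := by
  have hmn : m ≤ n := by omega
  set A : List ℝ := ((List.range n).map q).reverse with hA
  set L : List ℝ := A ++ List.replicate m (q 0 + b) with hL
  have hAlen : A.length = n := by simp [hA]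
  have hAsorted : A.Pairwise (· ≤ ·) := by
    rw [hA, List.pairwise_reverse, List.pairwise_map]
    exact (List.pairwise_lt_range (n := n)).imp_of_mem
      (fun ha hb hab => hq _ _ hab.le (List.mem_range.mp hb))
  have hAle : ∀ x ∈ A, x ≤ q 0 + b := by
    intro x hx
    rw [hA, List.mem_reverse, List.mem_map] at hx
    obtain ⟨i, hi, rfl⟩ := hx
    have := hq 0 i (Nat.zero_le i) (List.mem_range.mp hi)
    linarith
  have hLsorted : L.Pairwise (· ≤ ·) := by
    rw [hL, List.pairwise_append]
    refine ⟨hAsorted, List.pairwise_replicate.mpr (Or.inr le_rfl), ?_⟩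
    intro x hx y hy
    rw [List.eq_of_mem_replicate hy]
    exact hAle x hx
  have hcoe : (L : Multiset ℝ) = qMs n q + Multiset.replicate m (q 0 + b) := by
    simp only [hL, hA, qMs]
    rw [← Multiset.coe_add, Multiset.coe_reverse, Multiset.coe_replicate]
    simp [Multiset.map_coe, Multiset.range]
  have hsort : Multiset.sort (qMs n q + Multiset.replicate m (q 0 + b)) (· ≤ ·) = L := by
    apply List.Perm.eq_of_pairwise' (r := (· ≤ ·)) (Multiset.pairwise_sort _ _) hLsorted
    rw [← Multiset.coe_eq_coe, Multiset.sort_eq, hcoe]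
  have hcard : Multiset.card (qMs n q + Multiset.replicate m (q 0 + b)) = n + m := by
    simp [qMs]
  rw [trimmedMean, hsort, hcard]
  have h1 : n + m - 2 * m = n - m := by omega
  have h2 : L.drop m = A.drop m ++ List.replicate m (q 0 + b) :=
    List.drop_append_of_le_length (by omega)
  have h3 : (A.drop m).length = n - m := by simp [hAlen]
  rw [h1, h2, List.take_append_of_le_length (by omega), List.take_of_length_le (by omega)]
  have h4 : A.drop m = ((List.range (n - m)).map q).reverse := by
    rw [hA, List.drop_reverse, List.length_map, List.length_range, ← List.map_take,
      List.take_range, Nat.min_eq_left (by omega)]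
  rw [h4, List.sum_reverse, list_range_map_sum, hw]
  have : ((n : ℝ) + m) - 2 * m = (n : ℝ) - m := by ring
  push_cast
  rw [this]
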